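/- Let F be a Banach lattice, X a Banach space, 1 < p ≤ ∞. Suppose T : X → F satisfies the domination: there exist C > 0 and a probability measure μ on B_{F**}⁺ such that |⟨T(x), y*⟩| ≤ C ‖x‖ (∫_{B_{F**}⁺} ⟨|y*|, ψ⟩^{p*} dμ(ψ))^{1/p*} for all x ∈ X and y* ∈ F*. Then T is positive strongly p-summing with d_p⁺(T) ≤ C: for all finite families (x_i) ⊂ X and (y_i*) ⊂ F*⁺, Σ_i |⟨T(x_i), y_i*⟩| ≤ C (Σ_i ‖x_i‖^p)^{1/p} ‖(y_i*)‖_{w,p*}. -/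

import Mathlib

open MeasureTheory

/-- The positive part of the bidual unit ball of a Banach lattice `F`, with the
weak-* topology. -/
def PosBidualBall (F : Type*) [NormedAddCommGroup F] [Lattice F] [HasSolidNorm F] [IsOrderedAddMonoid F] [NormedSpace ℝ F] : Type _ :=
  {ψ : WeakDual ℝ (F →L[ℝ] ℝ) // (∀ φ : F →L[ℝ] ℝ, |ψ φ| ≤ ‖φ‖) ∧
    ∀ φ : F →L[ℝ] ℝ, (∀ y, 0 ≤ y → 0 ≤ φ y) → 0 ≤ ψ φ}

instance (F : Type*) [NormedAddCommGroup F] [Lattice F] [HasSolidNorm F] [IsOrderedAddMonoid F] [NormedSpace ℝ F] :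
    TopologicalSpace (PosBidualBall F) :=
  inferInstanceAs (TopologicalSpace (Subtype _))

noncomputable instance (F : Type*) [NormedAddCommGroup F] [Lattice F] [HasSolidNorm F] [IsOrderedAddMonoid F] [NormedSpace ℝ F] :
    MeasurableSpace (PosBidualBall F) := borel _

instance (F : Type*) [NormedAddCommGroup F] [Lattice F] [HasSolidNorm F] [IsOrderedAddMonoid F] [NormedSpace ℝ F] :
    BorelSpace (PosBidualBall F) := ⟨rfl⟩

/-- If `|⟨T x, y*⟩| ≤ C ‖x‖ (∫_{B_{F**}⁺} ⟨|y*|, ψ⟩^{p*} dμ)^{1/p*}` for all `x ∈ X`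
and `y* ∈ F*`, then `T` is positive strongly `p`-summing with `d_p⁺(T) ≤ C`.
Here `aD φ = |φ|` is the lattice absolute value in the dual, characterized as the
least upper bound of `φ` and `-φ` for the dual order. -/
theorem domination_implies_positive_strongly_p_summing
    {X : Type*} [NormedAddCommGroup X] [NormedSpace ℝ X]
    {F : Type*} [NormedAddCommGroup F] [Lattice F] [HasSolidNorm F] [IsOrderedAddMonoid F] [NormedSpace ℝ F]
    (p pstar : ℝ) (hp : 1 < p) (hconj : 1 / p + 1 / pstar = 1)
    (aD : (F →L[ℝ] ℝ) → (F →L[ℝ] ℝ))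
    (haD : ∀ φ : F →L[ℝ] ℝ,
      (∀ y : F, 0 ≤ y → φ y ≤ aD φ y ∧ -φ y ≤ aD φ y) ∧
      ∀ χ : F →L[ℝ] ℝ, (∀ y : F, 0 ≤ y → φ y ≤ χ y ∧ -φ y ≤ χ y) →
        ∀ y : F, 0 ≤ y → aD φ y ≤ χ y)
    (T : X →L[ℝ] F) (C : ℝ) (hC : 0 < C)
    (μ : Measure (PosBidualBall F)) [IsProbabilityMeasure μ]
    (hdom : ∀ (x : X) (φ : F →L[ℝ] ℝ),
      |φ (T x)| ≤ C * ‖x‖ * (∫ ψ : PosBidualBall F, (ψ.1 (aD φ)) ^ pstar ∂μ) ^ (1 / pstar)) :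
    ∀ (n : ℕ) (x : Fin n → X) (y : Fin n → (F →L[ℝ] ℝ)),
      (∀ i, ∀ z, 0 ≤ z → 0 ≤ y i z) →
      ∑ i, |y i (T (x i))| ≤
        C * (∑ i, ‖x i‖ ^ p) ^ (1 / p) *
          sSup {s : ℝ | ∃ ψ : (F →L[ℝ] ℝ) →L[ℝ] ℝ, ‖ψ‖ ≤ 1 ∧
            s = (∑ i, |ψ (y i)| ^ pstar) ^ (1 / pstar)} := by
  intro n x y hy
  have hpq : p.HolderConjugate pstar := Real.holderConjugate_iff.mpr ⟨hp, by rw [← one_div, ← one_div]; exact hconj⟩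
  have hps_pos : (0 : ℝ) < pstar := hpq.symm.pos
  have hps_ne : pstar ≠ 0 := hps_pos.ne'
  set S := {s : ℝ | ∃ ψ : (F →L[ℝ] ℝ) →L[ℝ] ℝ, ‖ψ‖ ≤ 1 ∧
      s = (∑ i, |ψ (y i)| ^ pstar) ^ (1 / pstar)} with hS
  -- `aD (y i) = y i` since `y i` is positive
  have haDy : ∀ i, aD (y i) = y i := by
    intro i
    have key : ∀ z : F, 0 ≤ z → aD (y i) z = y i z := by
      intro z hz
      refine le_antisymm ((haD (y i)).2 (y i) (fun w hw => ⟨le_rfl, ?_⟩) z hz)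
        ((haD (y i)).1 z hz).1
      have := hy i w hw; linarith
    ext z
    have hz1 : (0 : F) ≤ z⁺ := posPart_nonneg z
    have hz2 : (0 : F) ≤ z⁻ := negPart_nonneg z
    calc aD (y i) z = aD (y i) (z⁺ - z⁻) := by rw [posPart_sub_negPart]
      _ = aD (y i) z⁺ - aD (y i) z⁻ := by rw [map_sub]
      _ = y i z⁺ - y i z⁻ := by rw [key _ hz1, key _ hz2]
      _ = y i (z⁺ - z⁻) := by rw [map_sub]
      _ = y i z := by rw [posPart_sub_negPart]
  -- each ψ in the ball evaluates nonnegatively on `y i`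
  have hev_nonneg : ∀ (ψ : PosBidualBall F) (i : Fin n), 0 ≤ ψ.1 (y i) :=
    fun ψ i => ψ.2.2 (y i) (hy i)
  -- continuity / integrability of ψ ↦ (ψ (y i)) ^ pstar
  have hcont : ∀ i : Fin n, Continuous fun ψ : PosBidualBall F => (ψ.1 (y i)) ^ pstar := by
    intro i
    have h1 : Continuous fun ψ : PosBidualBall F => ψ.1 (y i) :=
      (WeakDual.eval_continuous (y i)).comp continuous_subtype_val
    rw [continuous_iff_continuousAt]
    intro ψ
    exact (Real.continuousAt_rpow_const _ _ (Or.inr hps_pos.le)).comp h1.continuousAt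
  have hint : ∀ i : Fin n,
      Integrable (fun ψ : PosBidualBall F => (ψ.1 (y i)) ^ pstar) μ := by
    intro i
    refine Integrable.mono' (integrable_const (‖y i‖ ^ pstar))
      (hcont i).aestronglyMeasurable (Filter.Eventually.of_forall fun ψ => ?_)
    rw [Real.norm_eq_abs, abs_of_nonneg (Real.rpow_nonneg (hev_nonneg ψ i) _)]
    exact Real.rpow_le_rpow (hev_nonneg ψ i)
      ((abs_of_nonneg (hev_nonneg ψ i)) ▸ ψ.2.1 (y i)) hps_pos.le
  have hintnn : ∀ i : Fin n, 0 ≤ ∫ ψ : PosBidualBall F, (ψ.1 (y i)) ^ pstar ∂μ :=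
    fun i => integral_nonneg fun ψ => Real.rpow_nonneg (hev_nonneg ψ i) _
  -- the sup set is nonempty and bounded above
  have h0S : (0 : ℝ) ∈ S := by
    refine ⟨0, le_trans (le_of_eq ContinuousLinearMap.opNorm_zero) zero_le_one, ?_⟩
    rw [Finset.sum_eq_zero fun i _ => by simp [Real.zero_rpow hps_ne],
      Real.zero_rpow (one_div_ne_zero hps_ne)]
  have hbdd : BddAbove S := by
    refine ⟨(∑ i, ‖y i‖ ^ pstar) ^ (1 / pstar), fun s hs => ?_⟩
    obtain ⟨ψ, hψ, rfl⟩ := hs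
    refine Real.rpow_le_rpow (Finset.sum_nonneg fun i _ =>
      Real.rpow_nonneg (abs_nonneg _) _) (Finset.sum_le_sum fun i _ => ?_) (by positivity)
    refine Real.rpow_le_rpow (abs_nonneg _) ?_ hps_pos.le
    calc |ψ (y i)| = ‖ψ (y i)‖ := rfl
      _ ≤ ‖ψ‖ * ‖y i‖ := ψ.le_opNorm _
      _ ≤ 1 * ‖y i‖ := by gcongr
      _ = ‖y i‖ := one_mul _
  set s := sSup S with hs_def
  have hs_nonneg : (0 : ℝ) ≤ s := le_csSup hbdd h0S
  -- pointwise bound on the integrand sum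
  have hpointwise : ∀ ψ : PosBidualBall F,
      ∑ i, (ψ.1 (y i)) ^ pstar ≤ s ^ pstar := by
    intro ψ
    let ψ' : (F →L[ℝ] ℝ) →L[ℝ] ℝ := ψ.1
    have hψnorm : ‖ψ'‖ ≤ 1 :=
      ContinuousLinearMap.opNorm_le_bound ψ' zero_le_one fun φ => by
        rw [one_mul, Real.norm_eq_abs]; exact ψ.2.1 φ
    have hmem : ((∑ i, |ψ' (y i)| ^ pstar) ^ (1 / pstar)) ∈ S :=
      ⟨ψ', hψnorm, rfl⟩
    have hle : (∑ i, |ψ.1 (y i)| ^ pstar) ^ (1 / pstar) ≤ s := le_csSup hbdd hmem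
    have hsum_nonneg : (0 : ℝ) ≤ ∑ i, |ψ.1 (y i)| ^ pstar :=
      Finset.sum_nonneg fun i _ => Real.rpow_nonneg (abs_nonneg _) _
    have := Real.rpow_le_rpow (Real.rpow_nonneg hsum_nonneg _) hle hps_pos.le
    rw [← Real.rpow_mul hsum_nonneg, one_div, inv_mul_cancel₀ hps_ne, Real.rpow_one] at this
    calc ∑ i, (ψ.1 (y i)) ^ pstar = ∑ i, |ψ.1 (y i)| ^ pstar := by
          refine Finset.sum_congr rfl fun i _ => ?_
          rw [abs_of_nonneg (hev_nonneg ψ i)]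
      _ ≤ s ^ pstar := this
  -- the key integral bound
  have hintsum : ∑ i, ∫ ψ : PosBidualBall F, (ψ.1 (y i)) ^ pstar ∂μ ≤ s ^ pstar := by
    rw [← integral_finset_sum _ fun i _ => hint i]
    calc ∫ ψ : PosBidualBall F, ∑ i, (ψ.1 (y i)) ^ pstar ∂μ
        ≤ ∫ _ : PosBidualBall F, s ^ pstar ∂μ := by
          refine integral_mono (integrable_finset_sum _ fun i _ => hint i)
            (integrable_const _) fun ψ => hpointwise ψ
      _ = s ^ pstar := by simp
  -- put everything together
  set a : Fin n → ℝ := fun i =>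
    (∫ ψ : PosBidualBall F, (ψ.1 (y i)) ^ pstar ∂μ) ^ (1 / pstar) with ha
  have ha_nonneg : ∀ i, 0 ≤ a i := fun i => Real.rpow_nonneg (hintnn i) _
  have hstep1 : ∑ i, |y i (T (x i))| ≤ C * ∑ i, ‖x i‖ * a i := by
    rw [Finset.mul_sum]
    refine Finset.sum_le_sum fun i _ => ?_
    have := hdom (x i) (y i)
    rw [haDy i] at this
    calc |y i (T (x i))| ≤ C * ‖x i‖ * a i := this
      _ = C * (‖x i‖ * a i) := by ring
  have hholder : ∑ i, ‖x i‖ * a i ≤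
      (∑ i, ‖x i‖ ^ p) ^ (1 / p) * (∑ i, a i ^ pstar) ^ (1 / pstar) := by
    have := Real.inner_le_Lp_mul_Lq (s := Finset.univ) (f := fun i => ‖x i‖) (g := a) hpq
    simpa [abs_of_nonneg (norm_nonneg _), fun i => abs_of_nonneg (ha_nonneg i)] using this
  have hsum_a : (∑ i, a i ^ pstar) ^ (1 / pstar) ≤ s := by
    have heq : ∀ i, a i ^ pstar = ∫ ψ : PosBidualBall F, (ψ.1 (y i)) ^ pstar ∂μ := by
      intro i
      rw [ha]
      rw [← Real.rpow_mul (hintnn i), one_div, inv_mul_cancel₀ hps_ne, Real.rpow_one]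
    have h1 : ∑ i, a i ^ pstar ≤ s ^ pstar := by
      rw [Finset.sum_congr rfl fun i _ => heq i]; exact hintsum
    have hsum_nonneg : (0 : ℝ) ≤ ∑ i, a i ^ pstar :=
      Finset.sum_nonneg fun i _ => Real.rpow_nonneg (ha_nonneg i) _
    calc (∑ i, a i ^ pstar) ^ (1 / pstar) ≤ (s ^ pstar) ^ (1 / pstar) :=
          Real.rpow_le_rpow hsum_nonneg h1 (by positivity)
      _ = s := by
          rw [← Real.rpow_mul hs_nonneg, mul_one_div, div_self hps_ne, Real.rpow_one]
  calc ∑ i, |y i (T (x i))| ≤ C * ∑ i, ‖x i‖ * a i := hstep1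
    _ ≤ C * ((∑ i, ‖x i‖ ^ p) ^ (1 / p) * (∑ i, a i ^ pstar) ^ (1 / pstar)) := by
        exact mul_le_mul_of_nonneg_left hholder hC.le
    _ ≤ C * ((∑ i, ‖x i‖ ^ p) ^ (1 / p) * s) := by
        refine mul_le_mul_of_nonneg_left ?_ hC.le
        exact mul_le_mul_of_nonneg_left hsum_a (by positivity)
    _ = C * (∑ i, ‖x i‖ ^ p) ^ (1 / p) * s := by ring
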